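/- Let a₀ ≥ 3 and k ≥ 4 be integers. Define b₀ = ⌊k·a₀/2⌋, and for l ≥ 1, a_l = k·b_{l−1} − a₀ + 1 and b_l = ⌊k·a_l/2⌋. Let A = ⋃_{l≥0} [a_l, b_l] ∩ ℕ. Then for every l ≥ 0 and every n ∈ [a_l, b_l], there do not exist a, b ∈ A with a < n, b < n and n = k·a − b. -/
import Mathlib


theorem stmt_10 (k : ℕ) (a b : ℕ → ℕ) (hk : 4 ≤ k) (ha0 : 3 ≤ a 0)
    (hb : ∀ l, b l = k * a l / 2)
    (ha : ∀ l, a (l + 1) = k * b l - a 0 + 1) :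
    ∀ l n, a l ≤ n → n ≤ b l →
      ¬ ∃ x ∈ {m : ℕ | ∃ j, a j ≤ m ∧ m ≤ b j},
          ∃ y ∈ {m : ℕ | ∃ j, a j ≤ m ∧ m ≤ b j},
            x < n ∧ y < n ∧ n + y = k * x := by
  -- b l ≥ 2 * a l
  have hble : ∀ l, 2 * a l ≤ b l := by
    intro l
    rw [hb l, Nat.le_div_iff_mul_le (by norm_num : 0 < 2)]
    have h4 : 4 * a l ≤ k * a l := Nat.mul_le_mul hk le_rfl
    omega
  -- a 0 ≤ a l for all l
  have ha0le : ∀ l, a 0 ≤ a l := by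
    intro l
    induction l with
    | zero => exact le_rfl
    | succ m ih =>
      have h1 := hble m
      have h2 : 4 * b m ≤ k * b m := Nat.mul_le_mul hk le_rfl
      rw [ha m]
      omega
  -- b l < a (l+1)
  have hba : ∀ l, b l < a (l + 1) := by
    intro l
    have h1 := hble l
    have h2 : 4 * b l ≤ k * b l := Nat.mul_le_mul hk le_rfl
    have h3 := ha0le l
    rw [ha l]
    omega
  have amono : Monotone a := by
    apply monotone_nat_of_le_succ
    intro l
    have := hba l
    have := hble l
    omega
  have bmono : Monotone b := by
    apply monotone_nat_of_le_succ
    intro l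
    have h1 := hba l
    have h2 := hble (l + 1)
    have h3 := ha0le (l + 1)
    omega
  intro l n hal hbl
  rintro ⟨x, ⟨j, hxj1, hxj2⟩, y, ⟨i, hyi1, hyi2⟩, hx, hy, heq⟩
  have hy0 : a 0 ≤ y := (ha0le i).trans hyi1
  by_cases hjl : l ≤ j
  · -- x ≥ a l, but k*x = n + y < 2 * b l ≤ k * a l
    have hax : a l ≤ x := (amono hjl).trans hxj1
    have h2bl : b l * 2 ≤ k * a l := by
      rw [hb l]; exact Nat.div_mul_le_self _ 2
    have hkx : k * a l ≤ k * x := Nat.mul_le_mul le_rfl hax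
    omega
  · -- j < l, so x ≤ b (l-1), k*x ≤ k*b(l-1) = a l + a 0 - 1 < n + y
    obtain ⟨m, rfl⟩ : ∃ m, l = m + 1 := ⟨l - 1, by omega⟩
    have hbj : b j ≤ b m := bmono (by omega)
    have hkx : k * x ≤ k * b m := Nat.mul_le_mul le_rfl (hxj2.trans hbj)
    have h2 : 4 * b m ≤ k * b m := Nat.mul_le_mul hk le_rfl
    have h1 := hble m
    have h3 := ha0le m
    have h4 := ha m
    omega
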